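/- Let θ be a primitive random substitution whose subshift has zero topological entropy. Then there exists a deterministic substitution φ (in fact a marginal of θ, mapping each letter to the longest realisation) which is primitive and satisfies X_φ = X_θ. -/

import Mathlib

open Filter Topology

namespace RandSub

variable {A : Type*} [DecidableEq A]

/-- Extension of a substitution to words: set of all concatenations of realisations. -/
def wordSubst (θ : A → Finset (List A)) : List A → Finset (List A)
  | [] => {([] : List A)}
  | a :: u => (θ a).biUnion fun v => (wordSubst θ u).image fun w => v ++ w

/-- Powers of a random substitution: `substPow θ m a` is the set of realisations of `θ^m(a)`. -/
def substPow (θ : A → Finset (List A)) : ℕ → A → Finset (List A)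
  | 0, a => {[a]}
  | m + 1, a => (substPow θ m a).biUnion fun v => wordSubst θ v

/-- `θ^m` applied to a word. -/
def wordSubstPow (θ : A → Finset (List A)) (m : ℕ) (u : List A) : Finset (List A) :=
  wordSubst (fun a => substPow θ m a) u

/-- A word is θ-legal if it occurs as a subword of some realisation of some `θ^k(a)`. -/
def IsLegal (θ : A → Finset (List A)) (u : List A) : Prop :=
  ∃ (a : A) (k : ℕ) (w : List A), w ∈ substPow θ k a ∧ u <:+: w

/-- The finite subword of a bi-infinite sequence `x` of length `n` starting at position `i`. -/
def wordAt {B : Type*} (x : ℤ → B) (i : ℤ) (n : ℕ) : List B :=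
  (List.range n).map fun j => x (i + j)

/-- The subshift associated with a random substitution. -/
def substShift (θ : A → Finset (List A)) : Set (ℤ → A) :=
  {x | ∀ (i : ℤ) (n : ℕ), IsLegal θ (wordAt x i n)}

/-- The language of a subshift. -/
def lang {B : Type*} (X : Set (ℤ → B)) : Set (List B) :=
  {u | ∃ x ∈ X, ∃ i : ℤ, u = wordAt x i u.length}

/-- The complexity function of a subshift. -/
noncomputable def complexity {B : Type*} (X : Set (ℤ → B)) (n : ℕ) : ℕ :=
  Nat.card {u : List B | u.length = n ∧ u ∈ lang X}

/-- Topological entropy of a subshift (defined via `limsup`; when the limit of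
`log p_X(n) / n` exists it coincides with it). -/
noncomputable def topEntropy {B : Type*} (X : Set (ℤ → B)) : ℝ :=
  Filter.atTop.limsup fun n : ℕ => Real.log (complexity X n) / n

/-- Primitivity of a random substitution. -/
def IsPrimitive (θ : A → Finset (List A)) : Prop :=
  ∃ k : ℕ, 0 < k ∧ ∀ a b : A, ∃ w ∈ substPow θ k b, a ∈ w

/-- A random substitution has constant length `ℓ`. -/
def ConstantLength (θ : A → Finset (List A)) (ℓ : ℕ) : Prop :=
  2 ≤ ℓ ∧ ∀ a : A, ∀ w ∈ θ a, w.length = ℓ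

/-- Permissible letter frequency vectors. -/
def IsPLFV (θ : A → Finset (List A)) (ν : A → ℝ) : Prop :=
  (∀ a, ν a ∈ Set.Icc (0 : ℝ) 1) ∧
  ∃ b : A, [b] ∈ lang (substShift θ) ∧
    ∃ n : ℕ → ℕ, Tendsto n atTop atTop ∧
      ∃ v : ℕ → List A, (∀ k, v k ∈ substPow θ (n k) b) ∧
        ∀ a, Tendsto (fun k => ((v k).count a : ℝ) / (v k).length) atTop (𝓝 (ν a))

end RandSub

open RandSub Filter Topology

set_option linter.unusedSectionVars false
set_option linter.unusedVariables false

namespace ZED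

variable {A : Type*} [DecidableEq A]

/-- Membership in `wordSubst` via `Forall₂`. -/
theorem mem_wordSubst {θ : A → Finset (List A)} {u w : List A} :
    w ∈ wordSubst θ u ↔
      ∃ l : List (List A), List.Forall₂ (fun a v => v ∈ θ a) u l ∧ w = l.flatten := by
  induction u generalizing w with
  | nil =>
    simp only [wordSubst, Finset.mem_singleton, List.forall₂_nil_left_iff]
    constructor
    · rintro rfl; exact ⟨[], rfl, rfl⟩
    · rintro ⟨l, rfl, rfl⟩; rfl
  | cons a u ih =>
    simp only [wordSubst, Finset.mem_biUnion, Finset.mem_image]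
    constructor
    · rintro ⟨v, hv, w', hw', rfl⟩
      obtain ⟨l, hl, rfl⟩ := ih.1 hw'
      exact ⟨v :: l, List.Forall₂.cons hv hl, rfl⟩
    · rintro ⟨l, hl, rfl⟩
      rcases hl with _ | ⟨hv, hl⟩
      exact ⟨_, hv, _, ih.2 ⟨_, hl, rfl⟩, rfl⟩

theorem append_mem_wordSubst {θ : A → Finset (List A)} {u₁ u₂ w₁ w₂ : List A}
    (h₁ : w₁ ∈ wordSubst θ u₁) (h₂ : w₂ ∈ wordSubst θ u₂) :
    w₁ ++ w₂ ∈ wordSubst θ (u₁ ++ u₂) := by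
  obtain ⟨l₁, hl₁, rfl⟩ := mem_wordSubst.1 h₁
  obtain ⟨l₂, hl₂, rfl⟩ := mem_wordSubst.1 h₂
  exact mem_wordSubst.2 ⟨l₁ ++ l₂, List.rel_append hl₁ hl₂, List.flatten_append.symm⟩

theorem singleton_mem_wordSubst {θ : A → Finset (List A)} {a : A} {w : List A}
    (h : w ∈ θ a) : w ∈ wordSubst θ [a] := by
  refine mem_wordSubst.2 ⟨[w], List.Forall₂.cons h List.Forall₂.nil, ?_⟩
  simp

/-- `wordSubst` is monotone in the substitution. -/
theorem wordSubst_mono {θ₁ θ₂ : A → Finset (List A)} (h : ∀ a, θ₁ a ⊆ θ₂ a) {u w : List A}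
    (hw : w ∈ wordSubst θ₁ u) : w ∈ wordSubst θ₂ u := by
  obtain ⟨l, hl, rfl⟩ := mem_wordSubst.1 hw
  exact mem_wordSubst.2 ⟨l, hl.imp fun {a v} hv => h a hv, rfl⟩

theorem substPow_mono {θ₁ θ₂ : A → Finset (List A)} (h : ∀ a, θ₁ a ⊆ θ₂ a) :
    ∀ (k : ℕ) (a : A), substPow θ₁ k a ⊆ substPow θ₂ k a := by
  intro k
  induction k with
  | zero => intro a w hw; exact hw
  | succ k ih =>
    intro a w hw
    simp only [substPow, Finset.mem_biUnion] at hw ⊢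
    obtain ⟨v, hv, hw⟩ := hw
    exact ⟨v, ih a hv, wordSubst_mono h hw⟩

theorem length_le_of_forall₂ {R : A → List A → Prop} {u : List A} {l : List (List A)}
    (hl : List.Forall₂ R u l) (hne : ∀ a v, R a v → v ≠ []) :
    u.length ≤ l.flatten.length := by
  induction hl with
  | nil => simp
  | @cons a v u' l' hav h ih =>
    have : 1 ≤ v.length := List.length_pos_iff.2 (hne a v hav)
    simp only [List.flatten_cons, List.length_append, List.length_cons]
    omega

theorem length_le_of_mem_wordSubst {θ : A → Finset (List A)} {u w : List A}
    (hne : ∀ a, ∀ v ∈ θ a, v ≠ []) (hw : w ∈ wordSubst θ u) : u.length ≤ w.length := by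
  obtain ⟨l, hl, rfl⟩ := mem_wordSubst.1 hw
  exact length_le_of_forall₂ hl fun a v hv => hne a v hv

/-- Words in powers are nonempty (indeed at least as long as needed). -/
theorem one_le_length_of_mem_substPow {θ : A → Finset (List A)}
    (hwne : ∀ a, ∀ v ∈ θ a, v ≠ []) {k : ℕ} {a : A} {w : List A}
    (hw : w ∈ substPow θ k a) : 1 ≤ w.length := by
  induction k generalizing a w with
  | zero => simp only [substPow, Finset.mem_singleton] at hw; simp [hw]
  | succ k ih =>
    simp only [substPow, Finset.mem_biUnion] at hw
    obtain ⟨v, hv, hw⟩ := hw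
    exact le_trans (ih hv) (length_le_of_mem_wordSubst hwne hw)

theorem ne_nil_of_mem_substPow {θ : A → Finset (List A)}
    (hwne : ∀ a, ∀ v ∈ θ a, v ≠ []) {k : ℕ} {a : A} {w : List A}
    (hw : w ∈ substPow θ k a) : w ≠ [] := by
  have := one_le_length_of_mem_substPow hwne hw
  intro h; simp [h] at this

theorem wordSubst_nonempty {θ : A → Finset (List A)} (hne : ∀ a, (θ a).Nonempty)
    (u : List A) : (wordSubst θ u).Nonempty := by
  induction u with
  | nil => exact ⟨[], by simp [wordSubst]⟩
  | cons a u ih =>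
    obtain ⟨v, hv⟩ := hne a
    obtain ⟨w, hw⟩ := ih
    refine ⟨v ++ w, ?_⟩
    simp only [wordSubst, Finset.mem_biUnion, Finset.mem_image]
    exact ⟨v, hv, w, hw, rfl⟩

theorem substPow_nonempty {θ : A → Finset (List A)} (hne : ∀ a, (θ a).Nonempty)
    (k : ℕ) (a : A) : (substPow θ k a).Nonempty := by
  induction k with
  | zero => exact ⟨[a], by simp [substPow]⟩
  | succ k ih =>
    obtain ⟨v, hv⟩ := ih
    obtain ⟨w, hw⟩ := wordSubst_nonempty hne v
    exact ⟨w, by simp only [substPow, Finset.mem_biUnion]; exact ⟨v, hv, hw⟩⟩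

/-- Composition: applying `θ^M` letterwise to a realisation of `θ^K(a)` gives a
realisation of `θ^(K+M)(a)`. -/
theorem flatten_eq_of_forall₂_pow_zero {θ : A → Finset (List A)} {u : List A}
    {l : List (List A)} (hl : List.Forall₂ (fun a v => v ∈ substPow θ 0 a) u l) :
    l.flatten = u := by
  induction hl with
  | nil => rfl
  | @cons a v u' l' hav h ih =>
    simp only [substPow, Finset.mem_singleton] at hav
    simp [hav, ih]

theorem forall₂_pow_succ_factor {θ : A → Finset (List A)} {M : ℕ} {w : List A}
    {l : List (List A)} (hl : List.Forall₂ (fun b t => t ∈ substPow θ (M + 1) b) w l) :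
    ∃ lv : List (List A), List.Forall₂ (fun b v => v ∈ substPow θ M b) w lv ∧
      l.flatten ∈ wordSubst θ lv.flatten := by
  induction hl with
  | nil => exact ⟨[], List.Forall₂.nil, by simp [wordSubst]⟩
  | @cons b t w' l' hbt h ih2 =>
    simp only [substPow, Finset.mem_biUnion] at hbt
    obtain ⟨v, hv, ht⟩ := hbt
    obtain ⟨lv, hlv, hjoin⟩ := ih2
    exact ⟨v :: lv, List.Forall₂.cons hv hlv, by
      simpa using append_mem_wordSubst ht hjoin⟩

theorem substPow_comp {θ : A → Finset (List A)} {K M : ℕ} {a : A} {w w' : List A}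
    (hw : w ∈ substPow θ K a) (hw' : w' ∈ wordSubst (fun b => substPow θ M b) w) :
    w' ∈ substPow θ (K + M) a := by
  induction M generalizing w' with
  | zero =>
    obtain ⟨l, hl, rfl⟩ := mem_wordSubst.1 hw'
    rwa [flatten_eq_of_forall₂_pow_zero hl]
  | succ M ih =>
    obtain ⟨l, hl, rfl⟩ := mem_wordSubst.1 hw'
    obtain ⟨lv, hlv, hjoin⟩ := forall₂_pow_succ_factor hl
    have hvmem : lv.flatten ∈ substPow θ (K + M) a :=
      ih (mem_wordSubst.2 ⟨lv, hlv, rfl⟩)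
    show _ ∈ substPow θ (K + M + 1) a
    simp only [substPow, Finset.mem_biUnion]
    exact ⟨lv.flatten, hvmem, hjoin⟩

/-- Infix monotonicity of `wordSubst`. -/
theorem wordSubst_infix {θ : A → Finset (List A)} {u U w : List A} (hu : u <:+: U)
    (hne : ∀ a, (θ a).Nonempty) (hw : w ∈ wordSubst θ u) :
    ∃ W ∈ wordSubst θ U, w <:+: W := by
  obtain ⟨p, s, rfl⟩ := hu
  obtain ⟨wp, hwp⟩ := wordSubst_nonempty hne p
  obtain ⟨ws, hws⟩ := wordSubst_nonempty hne s
  exact ⟨wp ++ w ++ ws, by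
    rw [show p ++ u ++ s = p ++ (u ++ s) by simp, show wp ++ w ++ ws = wp ++ (w ++ ws) by simp]
    exact append_mem_wordSubst hwp (append_mem_wordSubst hw hws), ⟨wp, ws, rfl⟩⟩

/-- Legality is preserved by applying a power of the substitution. -/
theorem isLegal_wordSubstPow {θ : A → Finset (List A)} (hne : ∀ a, (θ a).Nonempty)
    {M : ℕ} {u w : List A} (hu : IsLegal θ u)
    (hw : w ∈ wordSubst (fun b => substPow θ M b) u) : IsLegal θ w := by
  obtain ⟨a, k, W, hW, huW⟩ := hu
  obtain ⟨W', hW', hww'⟩ := wordSubst_infix huW (fun b => substPow_nonempty hne M b) hw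
  exact ⟨a, k + M, W', substPow_comp hW hW', hww'⟩

theorem isLegal_infix {θ : A → Finset (List A)} {u v : List A} (h : u <:+: v)
    (hv : IsLegal θ v) : IsLegal θ u := by
  obtain ⟨a, k, w, hw, hvw⟩ := hv
  exact ⟨a, k, w, hw, h.trans hvw⟩


/-! ### Part C: the deterministic marginal under prefix-comparability -/

variable (φ : A → List A)

/-- Iterates of the deterministic substitution `φ`. -/
def Phi : ℕ → A → List A
  | 0, a => [a]
  | k + 1, a => ((Phi k a).map φ).flatten

theorem wordSubst_single (u : List A) :
    wordSubst (fun a => ({φ a} : Finset (List A))) u = {(u.map φ).flatten} := by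
  induction u with
  | nil => simp [wordSubst]
  | cons a u ih =>
    simp [wordSubst, ih, Finset.biUnion_singleton]

theorem substPow_single (k : ℕ) (a : A) :
    substPow (fun a => ({φ a} : Finset (List A))) k a = {Phi φ k a} := by
  induction k with
  | zero => rfl
  | succ k ih =>
    show Finset.biUnion _ _ = _
    rw [ih, Finset.singleton_biUnion, wordSubst_single]
    rfl

variable {θ : A → Finset (List A)}

theorem Phi_mem_substPow (hφ : ∀ a, φ a ∈ θ a) (k : ℕ) (a : A) :
    Phi φ k a ∈ substPow θ k a := by
  have h := substPow_mono (θ₁ := fun a => ({φ a} : Finset (List A)))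
    (fun a w hw => by simp only [Finset.mem_singleton] at hw; exact hw ▸ hφ a) k a
  exact h (by rw [substPow_single]; exact Finset.mem_singleton_self _)

theorem sum_le_of_forall₂_max {u : List A} {l : List (List A)}
    (hl : List.Forall₂ (fun c t => t ∈ θ c) u l)
    (hmax : ∀ a, ∀ w ∈ θ a, w.length ≤ (φ a).length) :
    l.flatten.length ≤ ((u.map φ).flatten).length := by
  induction hl with
  | nil => simp
  | @cons a v u' l' hav h ih =>
    simp only [List.flatten_cons, List.length_append, List.map_cons]
    exact Nat.add_le_add (hmax a v hav) ih

/-- Under prefix comparability, `Phi φ k a` has maximal length among realisations. -/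
theorem length_le_Phi
    (hφ : ∀ a, φ a ∈ θ a) (hmax : ∀ a, ∀ w ∈ θ a, w.length ≤ (φ a).length)
    (hcomp : ∀ k a, ∀ u ∈ substPow θ k a, ∀ v ∈ substPow θ k a, u <+: v ∨ v <+: u) :
    ∀ k a, ∀ w ∈ substPow θ k a, w.length ≤ (Phi φ k a).length := by
  intro k
  induction k with
  | zero => intro a w hw; simp only [substPow, Finset.mem_singleton] at hw; simp [hw, Phi]
  | succ k ih =>
    intro a w hw
    simp only [substPow, Finset.mem_biUnion] at hw
    obtain ⟨v, hv, hw⟩ := hw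
    obtain ⟨l, hl, rfl⟩ := mem_wordSubst.1 hw
    have h1 : l.flatten.length ≤ ((v.map φ).flatten).length :=
      sum_le_of_forall₂_max φ hl hmax
    have hvpre : v <+: Phi φ k a := by
      rcases hcomp k a v hv (Phi φ k a) (Phi_mem_substPow φ hφ k a) with h | h
      · exact h
      · have h2 := ih a v hv
        have h3 := h.length_le
        have : Phi φ k a = v := List.IsPrefix.eq_of_length h (by omega)
        rw [← this]
    obtain ⟨r, hr⟩ := hvpre
    have : ((Phi φ k a).map φ).flatten.length
        = ((v.map φ).flatten).length + ((r.map φ).flatten).length := by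
      rw [← hr]; simp
    show _ ≤ (Phi φ (k+1) a).length
    simp only [Phi]
    omega

theorem prefix_Phi
    (hφ : ∀ a, φ a ∈ θ a) (hmax : ∀ a, ∀ w ∈ θ a, w.length ≤ (φ a).length)
    (hcomp : ∀ k a, ∀ u ∈ substPow θ k a, ∀ v ∈ substPow θ k a, u <+: v ∨ v <+: u) :
    ∀ k a, ∀ w ∈ substPow θ k a, w <+: Phi φ k a := by
  intro k a w hw
  rcases hcomp k a w hw (Phi φ k a) (Phi_mem_substPow φ hφ k a) with h | h
  · exact h
  · have h2 := length_le_Phi φ hφ hmax hcomp k a w hw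
    have h3 := h.length_le
    have : Phi φ k a = w := List.IsPrefix.eq_of_length h (by omega)
    rw [this]

theorem isLegal_iff
    (hφ : ∀ a, φ a ∈ θ a) (hmax : ∀ a, ∀ w ∈ θ a, w.length ≤ (φ a).length)
    (hcomp : ∀ k a, ∀ u ∈ substPow θ k a, ∀ v ∈ substPow θ k a, u <+: v ∨ v <+: u)
    (u : List A) :
    IsLegal (fun a => ({φ a} : Finset (List A))) u ↔ IsLegal θ u := by
  constructor
  · rintro ⟨a, k, w, hw, huw⟩
    refine ⟨a, k, w, ?_, huw⟩
    exact substPow_mono (fun a w hw => by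
      simp only [Finset.mem_singleton] at hw; exact hw ▸ hφ a) k a hw
  · rintro ⟨a, k, w, hw, huw⟩
    refine ⟨a, k, Phi φ k a, by rw [substPow_single]; exact Finset.mem_singleton_self _, ?_⟩
    exact huw.trans (prefix_Phi φ hφ hmax hcomp k a w hw).isInfix

theorem substShift_eq
    (hφ : ∀ a, φ a ∈ θ a) (hmax : ∀ a, ∀ w ∈ θ a, w.length ≤ (φ a).length)
    (hcomp : ∀ k a, ∀ u ∈ substPow θ k a, ∀ v ∈ substPow θ k a, u <+: v ∨ v <+: u) :
    substShift (fun a => ({φ a} : Finset (List A))) = substShift θ := by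
  ext x
  constructor <;> intro hx i n
  · exact (isLegal_iff φ hφ hmax hcomp _).1 (hx i n)
  · exact (isLegal_iff φ hφ hmax hcomp _).2 (hx i n)

theorem isPrimitive_single
    (hφ : ∀ a, φ a ∈ θ a) (hmax : ∀ a, ∀ w ∈ θ a, w.length ≤ (φ a).length)
    (hcomp : ∀ k a, ∀ u ∈ substPow θ k a, ∀ v ∈ substPow θ k a, u <+: v ∨ v <+: u)
    (hprim : IsPrimitive θ) :
    IsPrimitive (fun a => ({φ a} : Finset (List A))) := by
  obtain ⟨k, hk, h⟩ := hprim
  refine ⟨k, hk, fun a b => ?_⟩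
  obtain ⟨w, hw, haw⟩ := h a b
  refine ⟨Phi φ k b, by rw [substPow_single]; exact Finset.mem_singleton_self _, ?_⟩
  exact (prefix_Phi φ hφ hmax hcomp k b w hw).subset haw


/-! ### Part B1: `wordAt` lemmas and bi-infinite points from substitutions -/

theorem wordAt_eq_map {B : Type*} (x : ℤ → B) (i : ℤ) (n : ℕ) :
    wordAt x i n = (List.range n).map (fun j : ℕ => x (i + (j : ℤ))) := by
  unfold wordAt
  generalize List.range n = l
  induction l with
  | nil => rfl
  | cons a l ih => simp_all

theorem length_wordAt {B : Type*} (x : ℤ → B) (i : ℤ) (n : ℕ) :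
    (wordAt x i n).length = n := by simp [wordAt_eq_map]

theorem wordAt_append {B : Type*} (x : ℤ → B) (i : ℤ) (p q : ℕ) :
    wordAt x i (p + q) = wordAt x i p ++ wordAt x (i + (p : ℤ)) q := by
  rw [wordAt_eq_map, wordAt_eq_map, wordAt_eq_map, List.range_add, List.map_append, List.map_map]
  congr 1
  apply List.map_congr_left
  intro j _
  simp only [Function.comp_apply]
  congr 1
  push_cast
  ring

theorem wordAt_infix {B : Type*} (x : ℤ → B) {i i' : ℤ} {n n' : ℕ}
    (h1 : i' ≤ i) (h2 : i + n ≤ i' + n') :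
    wordAt x i n <:+: wordAt x i' n' := by
  set p : ℕ := (i - i').toNat with hp
  have hip : i = i' + (p : ℤ) := by omega
  have hn' : n' = p + n + (n' - p - n) := by omega
  rw [hn', wordAt_append, wordAt_append, ← hip]
  refine ⟨wordAt x i' p, wordAt x (i + (n : ℤ)) (n' - p - n), ?_⟩
  have h3 : i' + ((p + n : ℕ) : ℤ) = i + (n : ℤ) := by push_cast; omega
  rw [h3]

section Point

variable (g : ℤ → List A)

/-- Concatenation of blocks `g 0, …, g (m-1)`. -/
def Jr (m : ℕ) : List A := ((List.range m).map (fun j : ℕ => g (j : ℤ))).flatten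

/-- Concatenation of blocks `g (-m), …, g (-1)`. -/
def Jl (m : ℕ) : List A := ((List.range m).map (fun j : ℕ => g ((j : ℤ) - (m : ℤ)))).flatten

theorem Jr_succ (m : ℕ) : Jr g (m + 1) = Jr g m ++ g m := by
  unfold Jr
  rw [List.range_succ, List.map_append, List.flatten_append]
  simp

theorem Jl_succ (m : ℕ) : Jl g (m + 1) = g (-(m : ℤ) - 1) ++ Jl g m := by
  unfold Jl
  rw [List.range_succ_eq_map, List.map_cons, List.map_map, List.flatten_cons]
  congr 1
  · congr 1; push_cast; ring
  · congr 1
    apply List.map_congr_left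
    intro j _
    simp only [Function.comp_apply]
    congr 1
    push_cast
    ring

theorem Jr_prefix {m m' : ℕ} (h : m ≤ m') : Jr g m <+: Jr g m' := by
  induction m' with
  | zero => have : m = 0 := by omega
            simp [this]
  | succ m' ih =>
    rcases Nat.eq_or_lt_of_le h with rfl | h'
    · exact List.prefix_refl _
    · exact (ih (by omega)).trans (by rw [Jr_succ]; exact List.prefix_append _ _)

theorem Jl_suffix {m m' : ℕ} (h : m ≤ m') : Jl g m <:+ Jl g m' := by
  induction m' with
  | zero => have : m = 0 := by omega
            simp [this]
  | succ m' ih =>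
    rcases Nat.eq_or_lt_of_le h with rfl | h'
    · exact List.suffix_refl _
    · exact (ih (by omega)).trans (by rw [Jl_succ]; exact List.suffix_append _ _)

variable (hg1 : ∀ i, 1 ≤ (g i).length)

include hg1 in
theorem le_length_Jr (m : ℕ) : m ≤ (Jr g m).length := by
  induction m with
  | zero => simp
  | succ m ih =>
    rw [Jr_succ]
    have := hg1 (m : ℤ)
    simp only [List.length_append]
    omega

include hg1 in
theorem le_length_Jl (m : ℕ) : m ≤ (Jl g m).length := by
  induction m with
  | zero => simp
  | succ m ih =>
    rw [Jl_succ]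
    have := hg1 (-(m : ℤ) - 1)
    simp only [List.length_append]
    omega

theorem prefix_getD {l₁ l₂ : List A} (h : l₁ <+: l₂) {j : ℕ} (hj : j < l₁.length) (d : A) :
    l₁.getD j d = l₂.getD j d := by
  obtain ⟨r, rfl⟩ := h
  rw [List.getD_eq_getElem l₁ d hj,
    List.getD_eq_getElem _ d (by simp only [List.length_append]; omega),
    List.getElem_append_left hj]

theorem suffix_getD {l₁ l₂ : List A} (h : l₁ <:+ l₂) {t : ℕ} (ht : 1 ≤ t) (ht' : t ≤ l₁.length)
    (d : A) : l₁.getD (l₁.length - t) d = l₂.getD (l₂.length - t) d := by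
  obtain ⟨r, rfl⟩ := h
  rw [List.getD_eq_getElem l₁ d (by omega),
    List.getD_eq_getElem _ d (by simp only [List.length_append]; omega)]
  have : (r ++ l₁).length - t = r.length + (l₁.length - t) := by
    simp only [List.length_append]; omega
  simp_rw [this]
  rw [List.getElem_append_right (by omega)]
  congr 1
  omega

/-- The bi-infinite point determined by the blocks `g i`. -/
def ypt (d : A) : ℤ → A := fun i =>
  if 0 ≤ i then (Jr g (i.toNat + 1)).getD i.toNat d
  else (Jl g (-i).toNat).getD ((Jl g (-i).toNat).length - (-i).toNat) d

include hg1 in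
theorem ypt_nonneg (d : A) {m : ℕ} {j : ℕ} (hj : j < (Jr g m).length) :
    ypt g d (j : ℤ) = (Jr g m).getD j d := by
  have h0 : (0 : ℤ) ≤ (j : ℤ) := Int.ofNat_nonneg j
  have htn : ((j : ℤ)).toNat = j := Int.toNat_natCast j
  rw [ypt, if_pos h0, htn]
  have hjlt : j < (Jr g (j + 1)).length := lt_of_lt_of_le (Nat.lt_succ_self j) (le_length_Jr g hg1 _)
  rcases le_total (j + 1) m with h | h
  · exact prefix_getD (Jr_prefix g h) hjlt d
  · exact (prefix_getD (Jr_prefix g h) hj d).symm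

include hg1 in
theorem ypt_neg (d : A) {m : ℕ} {i : ℤ} (hi : i < 0) (hi' : -((Jl g m).length : ℤ) ≤ i) :
    ypt g d i = (Jl g m).getD (((Jl g m).length : ℤ) + i).toNat d := by
  have h0 : ¬ (0 : ℤ) ≤ i := by omega
  rw [ypt, if_neg h0]
  set t : ℕ := (-i).toNat with htdef
  have ht1 : 1 ≤ t := by omega
  have htm : t ≤ (Jl g m).length := by omega
  have htt : t ≤ (Jl g t).length := le_length_Jl g hg1 t
  have hidx : (((Jl g m).length : ℤ) + i).toNat = (Jl g m).length - t := by omega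
  rw [hidx]
  rcases le_total t m with h | h
  · exact suffix_getD (Jl_suffix g h) ht1 htt d
  · exact (suffix_getD (Jl_suffix g h) ht1 htm d).symm

include hg1 in
theorem wordAt_ypt (d : A) (m₁ m₂ : ℕ) :
    wordAt (ypt g d) (-((Jl g m₁).length : ℤ)) ((Jl g m₁).length + (Jr g m₂).length)
      = Jl g m₁ ++ Jr g m₂ := by
  apply List.ext_getElem
  · rw [length_wordAt]; simp
  intro p hp hp'
  rw [List.length_append] at hp'
  have hwp : p < (List.range ((Jl g m₁).length + (Jr g m₂).length)).length := by
    simpa using hp'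
  simp only [wordAt_eq_map, List.getElem_map, List.getElem_range]
  rcases lt_or_ge p (Jl g m₁).length with h | h
  · have hneg : -((Jl g m₁).length : ℤ) + (p : ℤ) < 0 := by omega
    rw [ypt_neg g hg1 d (m := m₁) hneg (by omega)]
    have hidx : (((Jl g m₁).length : ℤ) + (-((Jl g m₁).length : ℤ) + (p : ℤ))).toNat = p := by
      omega
    rw [hidx, List.getD_eq_getElem _ d h, List.getElem_append_left h]
  · have heq : -((Jl g m₁).length : ℤ) + (p : ℤ) = ((p - (Jl g m₁).length : ℕ) : ℤ) := by omega
    rw [heq, ypt_nonneg g hg1 d (m := m₂) (by omega)]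
    rw [List.getD_eq_getElem _ d (by omega), List.getElem_append_right h]

end Point

/-! ### Part B2: legality of the constructed point -/

section Point2

variable (g : ℤ → List A)

theorem Jl_zero : Jl g 0 = [] := rfl

theorem Jl_append_Jr (m₁ m₂ : ℕ) :
    Jl g m₁ ++ Jr g m₂
      = ((List.range (m₁ + m₂)).map (fun j : ℕ => g ((j : ℤ) - (m₁ : ℤ)))).flatten := by
  rw [List.range_add, List.map_append, List.flatten_append]
  congr 1
  rw [List.map_map]
  unfold Jr
  congr 1
  apply List.map_congr_left
  intro j _
  simp only [Function.comp_apply]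
  congr 1
  push_cast
  ring

variable {θ : A → Finset (List A)}

theorem forall₂_range_map {R : A → List A → Prop} {x : ℤ → A} {i : ℤ} {n : ℕ}
    (h : ∀ j : ℕ, j < n → R (x (i + (j : ℤ))) (g ((i : ℤ) + (j : ℤ)))) (hgx : True) :
    List.Forall₂ R (wordAt x i n) ((List.range n).map (fun j : ℕ => g (i + (j : ℤ)))) := by
  rw [wordAt_eq_map]
  rw [List.forall₂_iff_get]
  refine ⟨by simp, fun p h₁ h₂ => ?_⟩
  simp only [List.get_eq_getElem, List.getElem_map, List.getElem_range]
  exact h p (by simpa using h₁)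

theorem ypt_mem_substShift (hne : ∀ a, (θ a).Nonempty) (hwne : ∀ a, ∀ v ∈ θ a, v ≠ [])
    {x : ℤ → A} (hx : x ∈ substShift θ) {M : ℕ}
    (hg : ∀ i, g i ∈ substPow θ M (x i)) (d : A) :
    ypt g d ∈ substShift θ := by
  have hg1 : ∀ i, 1 ≤ (g i).length :=
    fun i => one_le_length_of_mem_substPow hwne (hg i)
  intro i n
  set m₁ : ℕ := (max 1 (-i)).toNat with hm₁
  set m₂ : ℕ := (max 1 (i + n)).toNat with hm₂
  have hL1 : m₁ ≤ (Jl g m₁).length := le_length_Jl g hg1 m₁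
  have hL2 : m₂ ≤ (Jr g m₂).length := le_length_Jr g hg1 m₂
  have hinf : wordAt (ypt g d) i n <:+:
      wordAt (ypt g d) (-((Jl g m₁).length : ℤ)) ((Jl g m₁).length + (Jr g m₂).length) := by
    apply wordAt_infix
    · omega
    · push_cast; omega
  rw [wordAt_ypt g hg1 d m₁ m₂] at hinf
  apply isLegal_infix hinf
  -- the concatenation is a substitution image of a legal word
  have hmem : Jl g m₁ ++ Jr g m₂
      ∈ wordSubst (fun b => substPow θ M b) (wordAt x (-(m₁ : ℤ)) (m₁ + m₂)) := by
    rw [Jl_append_Jr]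
    apply mem_wordSubst.2
    refine ⟨(List.range (m₁ + m₂)).map (fun j : ℕ => g ((j : ℤ) - (m₁ : ℤ))), ?_, rfl⟩
    have := forall₂_range_map (g := fun t : ℤ => g t) (R := fun b w => w ∈ substPow θ M b)
      (x := x) (i := -(m₁ : ℤ)) (n := m₁ + m₂)
      (fun j hj => by
        have : -(m₁ : ℤ) + (j : ℤ) = (j : ℤ) - (m₁ : ℤ) := by ring
        rw [this]
        exact hg _) trivial
    convert this using 2 with j
    funext j
    congr 1
    ring
  exact isLegal_wordSubstPow hne (hx (-(m₁ : ℤ)) (m₁ + m₂)) hmem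

theorem wordAt_ypt_zero (hg1 : ∀ i, 1 ≤ (g i).length) (d : A) (m : ℕ) :
    wordAt (ypt g d) 0 (Jr g m).length = Jr g m := by
  have h := wordAt_ypt g hg1 d 0 m
  rw [Jl_zero] at h
  simpa using h

end Point2

/-! ### Part B3: helpers for the counting argument -/

theorem exists_first_diff {u v : List A} (h1 : ¬u <+: v) (h2 : ¬v <+: u) :
    ∃ i₀ : ℕ, i₀ < u.length ∧ i₀ < v.length ∧ u[i₀]? ≠ v[i₀]? := by
  induction u generalizing v with
  | nil => exact absurd (List.nil_prefix) h1
  | cons x u' ih =>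
    cases v with
    | nil => exact absurd (List.nil_prefix) h2
    | cons y v' =>
      by_cases hxy : x = y
      · subst hxy
        have h1' : ¬u' <+: v' := fun h => h1 (List.cons_prefix_cons.2 ⟨rfl, h⟩)
        have h2' : ¬v' <+: u' := fun h => h2 (List.cons_prefix_cons.2 ⟨rfl, h⟩)
        obtain ⟨i₀, hi₁, hi₂, hne⟩ := ih h1' h2'
        exact ⟨i₀ + 1, by simpa using hi₁, by simpa using hi₂, by simpa using hne⟩
      · exact ⟨0, by simp, by simp, by simpa using hxy⟩

theorem forall₂_map_F {θ : A → Finset (List A)} {k : ℕ} {F : A → List A}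
    (hF : ∀ b, F b ∈ substPow θ k b) (l : List A) :
    List.Forall₂ (fun b t => t ∈ substPow θ k b) l (l.map F) := by
  induction l with
  | nil => simp
  | cons b l ih => exact List.Forall₂.cons (hF b) ih

theorem Jr_split (g : ℤ → List A) {j m : ℕ} (h : j ≤ m) :
    Jr g m = Jr g j ++ ((List.range (m - j)).map (fun t : ℕ => g ((j : ℤ) + (t : ℤ)))).flatten := by
  conv_lhs => rw [show m = j + (m - j) by omega]
  unfold Jr
  rw [List.range_add, List.map_append, List.flatten_append, List.map_map]
  congr 1

theorem Jr_split_succ (g : ℤ → List A) {j m : ℕ} (h : j < m) :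
    Jr g m = Jr g j ++ (g (j : ℤ) ++
      ((List.range (m - j - 1)).map (fun t : ℕ => g ((j : ℤ) + 1 + (t : ℤ)))).flatten) := by
  rw [Jr_split g h.le]
  congr 1
  rw [show m - j = (m - j - 1) + 1 by omega, List.range_succ_eq_map, List.map_cons,
    List.flatten_cons, List.map_map]
  congr 1
  rw [show m - j - 1 + 1 - 1 = m - j - 1 by omega]
  apply congrArg
  apply List.map_congr_left
  intro t _
  simp only [Function.comp_apply]
  congr 1
  push_cast
  ring

theorem getElem?_append_offset (xs ys : List A) (n : ℕ) :
    (xs ++ ys)[xs.length + n]? = ys[n]? := by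
  rw [List.getElem?_append_right (by omega)]
  congr 1
  omega

theorem length_Jr_sum (g : ℤ → List A) (m : ℕ) :
    (Jr g m).length = ∑ j ∈ Finset.range m, (g (j : ℤ)).length := by
  induction m with
  | zero => simp [Jr]
  | succ m ih => rw [Jr_succ, Finset.sum_range_succ, List.length_append, ih]

theorem sq_le_two_pow {m : ℕ} (h : 6 ≤ m) : (m + 1) ^ 2 ≤ 2 ^ m := by
  induction m, h using Nat.le_induction with
  | base => norm_num
  | succ m hm ih =>
    have h1 : (m + 2) ^ 2 ≤ 2 * (m + 1) ^ 2 := by nlinarith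
    calc (m + 1 + 1) ^ 2 = (m + 2) ^ 2 := by ring
    _ ≤ 2 * (m + 1) ^ 2 := h1
    _ ≤ 2 * 2 ^ m := by omega
    _ = 2 ^ (m + 1) := by ring

theorem two_pow_le_choose (m : ℕ) : 2 ^ m ≤ (m + 1) * m.choose (m / 2) := by
  have h1 : ∑ i ∈ Finset.range (m + 1), m.choose i = 2 ^ m := Nat.sum_range_choose m
  have h2 : ∑ i ∈ Finset.range (m + 1), m.choose i
      ≤ ∑ _i ∈ Finset.range (m + 1), m.choose (m / 2) :=
    Finset.sum_le_sum fun i _ => Nat.choose_le_middle i m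
  rw [← h1]
  refine h2.trans ?_
  simp [Finset.sum_const, mul_comm]

theorem card_le_complexity {X : Set (ℤ → A)} [Fintype A] {n : ℕ} (T : Finset (List A))
    (hT : ∀ w ∈ T, w.length = n ∧ w ∈ lang X) : T.card ≤ complexity X n := by
  unfold complexity
  rw [Nat.card_coe_set_eq, ← Set.ncard_coe_finset T]
  exact Set.ncard_le_ncard (fun w hw => hT w hw)
    ((List.finite_length_eq A n).subset (fun w hw => hw.1))

theorem complexity_le_card_pow {X : Set (ℤ → A)} [Fintype A] (d : A) (n : ℕ) :
    complexity X n ≤ Fintype.card A ^ n := by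
  unfold complexity
  have : Nat.card (Fin n → A) = Fintype.card A ^ n := by
    simp [Nat.card_eq_fintype_card]
  rw [← this]
  apply Nat.card_le_card_of_injective
    (f := fun u : {u : List A | u.length = n ∧ u ∈ lang X} => fun i : Fin n => u.1.getD i d)
  intro w₁ w₂ h
  ext1
  apply List.ext_getElem (by rw [w₁.2.1, w₂.2.1])
  intro j hj hj'
  have hjn : j < n := by rw [← w₁.2.1]; exact hj
  have h2 := congrFun h ⟨j, hjn⟩
  simp only at h2
  rwa [List.getD_eq_getElem _ d hj, List.getD_eq_getElem _ d hj'] at h2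


/-! ### Part B4: the counting lemma -/

theorem counting [Fintype A] {θ : A → Finset (List A)}
    (hne : ∀ a, (θ a).Nonempty) (hwne : ∀ a, ∀ w ∈ θ a, w ≠ [])
    {x₀ : ℤ → A} (hx₀ : x₀ ∈ substShift θ)
    {k K : ℕ} {a : A} {u v : List A}
    (hu : u ∈ substPow θ k a) (hv : v ∈ substPow θ k a)
    {i₀ : ℕ} (hi₀u : i₀ < u.length) (hi₀v : i₀ < v.length) (hne₀ : u[i₀]? ≠ v[i₀]?)
    {α β : A → List A} (hαβ : ∀ b, α b ++ a :: β b ∈ substPow θ K b)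
    {F : A → List A} (hF : ∀ b, F b ∈ substPow θ k b)
    {C₀ : ℕ} (hC₀ : ∀ b, ∀ w ∈ substPow θ (K + k) b, w.length ≤ C₀)
    (m : ℕ) :
    ∃ n : ℕ, m ≤ n ∧ n ≤ C₀ * m ∧
      2 ^ m ≤ (m + 1) * complexity (substShift θ) n := by
  classical
  set pre : A → List A := fun b => ((α b).map F).flatten with hpre
  set post : A → List A := fun b => ((β b).map F).flatten with hpost
  set gc : (ℕ → Bool) → ℤ → List A :=
    fun c i => pre (x₀ i) ++ ((if 0 ≤ i ∧ c i.toNat = true then u else v) ++ post (x₀ i))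
    with hgcdef
  -- membership of blocks
  have hsel : ∀ (c : ℕ → Bool) (i : ℤ),
      (if 0 ≤ i ∧ c i.toNat = true then u else v) ∈ substPow θ k a := by
    intro c i
    split <;> assumption
  have hgc : ∀ (c : ℕ → Bool) (i : ℤ), gc c i ∈ substPow θ (K + k) (x₀ i) := by
    intro c i
    apply substPow_comp (hαβ (x₀ i))
    apply mem_wordSubst.2
    refine ⟨(α (x₀ i)).map F ++ (if 0 ≤ i ∧ c i.toNat = true then u else v) :: (β (x₀ i)).map F,
      ?_, ?_⟩
    · exact List.rel_append (forall₂_map_F hF _) (List.Forall₂.cons (hsel c i) (forall₂_map_F hF _))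
    · rw [List.flatten_append, List.flatten_cons]
  have hg1 : ∀ (c : ℕ → Bool) (i : ℤ), 1 ≤ (gc c i).length :=
    fun c i => one_le_length_of_mem_substPow hwne (hgc c i)
  have hy : ∀ c : ℕ → Bool, ypt (gc c) (x₀ 0) ∈ substShift θ :=
    fun c => ypt_mem_substShift (gc c) hne hwne hx₀ (hgc c) (x₀ 0)
  have hWlang : ∀ (c : ℕ → Bool) (m' : ℕ), Jr (gc c) m' ∈ lang (substShift θ) :=
    fun c m' => ⟨ypt (gc c) (x₀ 0), hy c, 0, (wordAt_ypt_zero (gc c) (hg1 c) (x₀ 0) m').symm⟩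
  -- length of the word
  set S : ℕ → ℕ := fun j => (pre (x₀ (j : ℤ))).length + (post (x₀ (j : ℤ))).length with hS
  have hblock_len : ∀ (c : ℕ → Bool) (j : ℕ),
      (gc c (j : ℤ)).length = S j + (if c j = true then u.length else v.length) := by
    intro c j
    have h0 : (0 : ℤ) ≤ (j : ℤ) := Int.ofNat_nonneg j
    have htn : ((j : ℤ)).toNat = j := Int.toNat_natCast j
    simp only [hgcdef, List.length_append, htn, h0, true_and]
    split <;> simp only [hS] <;> omega
  have hlen : ∀ (c : ℕ → Bool) (m' : ℕ), (Jr (gc c) m').length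
      = (∑ j ∈ Finset.range m', S j)
        + ∑ j ∈ Finset.range m', (if c j = true then u.length else v.length) := by
    intro c m'
    rw [length_Jr_sum, ← Finset.sum_add_distrib]
    exact Finset.sum_congr rfl fun j _ => hblock_len c j
  set t : ℕ := m / 2 with ht
  set N : ℕ := (∑ j ∈ Finset.range m, S j) + (t * u.length + (m - t) * v.length) with hN
  -- the choice function associated with a set of positions
  set cf : Finset (Fin m) → ℕ → Bool :=
    fun s j => if h : j < m then decide ((⟨j, h⟩ : Fin m) ∈ s) else false with hcf
  have hsum_ite : ∀ s : Finset (Fin m), s.card = t →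
      ∑ j ∈ Finset.range m, (if cf s j = true then u.length else v.length)
        = t * u.length + (m - t) * v.length := by
    intro s hs
    rw [← Fin.sum_univ_eq_sum_range (fun j => if cf s j = true then u.length else v.length) m]
    have : ∀ j : Fin m, (if cf s (j : ℕ) = true then u.length else v.length)
        = (if j ∈ s then u.length else v.length) := by
      intro j
      simp only [hcf, j.isLt, dif_pos, decide_eq_true_eq, Fin.eta]
    rw [Finset.sum_congr rfl fun j _ => this j, Finset.sum_ite _ _]
    have h1 : (Finset.univ.filter (· ∈ s)) = s := Finset.filter_univ_mem s
    have h2 : (Finset.univ.filter (fun y => ¬ y ∈ s)).card = m - t := by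
      have := Finset.card_filter_add_card_filter_not (s := (Finset.univ : Finset (Fin m)))
        (p := (· ∈ s))
      rw [h1] at this
      simp only [Finset.card_univ, Fintype.card_fin] at this
      omega
    rw [h1]
    simp [h2, hs, mul_comm]
  have hlen_N : ∀ s : Finset (Fin m), s.card = t → (Jr (gc (cf s)) m).length = N := by
    intro s hs
    rw [hlen, hsum_ite s hs]
  -- distinctness
  have hdist : ∀ s s' : Finset (Fin m), s ≠ s' → Jr (gc (cf s)) m ≠ Jr (gc (cf s')) m := by
    intro s s' hss
    have hex : ∃ j : ℕ, cf s j ≠ cf s' j := by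
      by_contra hcon
      push_neg at hcon
      apply hss
      ext j
      have := hcon (j : ℕ)
      simpa [hcf, j.isLt] using this
    set j₀ : ℕ := Nat.find hex with hj₀
    have hdiff : cf s j₀ ≠ cf s' j₀ := Nat.find_spec hex
    have hj₀m : j₀ < m := by
      by_contra hcon
      apply hdiff
      simp only [hcf]
      rw [dif_neg (by omega), dif_neg (by omega)]
    have hbelow : ∀ j < j₀, cf s j = cf s' j := by
      intro j hj
      by_contra hcon
      exact Nat.find_min hex (by omega) hcon
    -- decompose both words at block j₀
    have hJr_eq : Jr (gc (cf s)) j₀ = Jr (gc (cf s')) j₀ := by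
      unfold Jr
      congr 1
      apply List.map_congr_left
      intro j hj
      rw [List.mem_range] at hj
      simp only [hgcdef]
      rw [Int.toNat_natCast, hbelow j hj]
    intro hWeq
    have hsplit : ∀ c : ℕ → Bool, Jr (gc c) m = Jr (gc c) j₀ ++
        (pre (x₀ (j₀ : ℤ)) ++ ((if 0 ≤ (j₀ : ℤ) ∧ c ((j₀ : ℤ)).toNat = true then u else v) ++
          (post (x₀ (j₀ : ℤ)) ++
            ((List.range (m - j₀ - 1)).map
              (fun t : ℕ => gc c ((j₀ : ℤ) + 1 + (t : ℤ)))).flatten))) := by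
      intro c
      rw [Jr_split_succ (gc c) hj₀m]
      simp only [hgcdef, List.append_assoc]
    set q : ℕ := (Jr (gc (cf s)) j₀).length + ((pre (x₀ (j₀ : ℤ))).length + i₀) with hq
    have hread : ∀ c : ℕ → Bool, (Jr (gc c) j₀) = (Jr (gc (cf s)) j₀) →
        (Jr (gc c) m)[q]? = (if 0 ≤ (j₀ : ℤ) ∧ c ((j₀ : ℤ)).toNat = true then u else v)[i₀]? := by
      intro c hc
      rw [hsplit c, hc, hq, getElem?_append_offset, getElem?_append_offset]
      set w : List A := if 0 ≤ (j₀ : ℤ) ∧ c ((j₀ : ℤ)).toNat = true then u else v with hw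
      have hi₀w : i₀ < w.length := by
        rw [hw]; split <;> assumption
      rw [List.getElem?_append_left hi₀w]
    have h1 := hread (cf s) rfl
    have h2 := hread (cf s') hJr_eq.symm
    rw [hWeq] at h1
    rw [h1] at h2
    have htn : ((j₀ : ℤ)).toNat = j₀ := Int.toNat_natCast j₀
    have h0 : (0 : ℤ) ≤ (j₀ : ℤ) := Int.ofNat_nonneg j₀
    simp only [htn, h0, true_and] at h2
    rcases Bool.eq_false_or_eq_true (cf s j₀) with hcs | hcs <;>
      rcases Bool.eq_false_or_eq_true (cf s' j₀) with hcs' | hcs'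
    · exact hdiff (by rw [hcs, hcs'])
    · rw [hcs, hcs'] at h2
      simp only [if_pos, if_neg] at h2
      simp at h2
      exact hne₀ h2
    · rw [hcs, hcs'] at h2
      simp only at h2
      simp at h2
      exact hne₀ h2.symm
    · exact hdiff (by rw [hcs, hcs'])
  -- counting
  have hcard : (Finset.powersetCard t (Finset.univ : Finset (Fin m))).card = m.choose t := by
    rw [Finset.card_powersetCard]
    simp
  set T : Finset (List A) :=
    (Finset.powersetCard t (Finset.univ : Finset (Fin m))).image (fun s => Jr (gc (cf s)) m)
    with hT
  have hTcard : T.card = m.choose t := by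
    rw [hT, Finset.card_image_of_injOn, hcard]
    intro s hs s' hs' h
    by_contra hss
    exact hdist s s' hss h
  have hTsub : ∀ w ∈ T, w.length = N ∧ w ∈ lang (substShift θ) := by
    intro w hw
    rw [hT, Finset.mem_image] at hw
    obtain ⟨s, hs, rfl⟩ := hw
    rw [Finset.mem_powersetCard] at hs
    exact ⟨hlen_N s hs.2, hWlang _ m⟩
  have hcomp : m.choose t ≤ complexity (substShift θ) N := by
    rw [← hTcard]
    exact card_le_complexity T hTsub
  -- bounds on N
  obtain ⟨s₀, -, hs₀⟩ := Finset.exists_subset_card_eq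
    (s := (Finset.univ : Finset (Fin m))) (n := t) (by simp [ht]; omega)
  have hNlow : m ≤ N := by
    rw [← hlen_N s₀ hs₀]
    exact le_length_Jr _ (hg1 _) m
  have hNhigh : N ≤ C₀ * m := by
    rw [← hlen_N s₀ hs₀, length_Jr_sum]
    calc ∑ j ∈ Finset.range m, (gc (cf s₀) (j : ℤ)).length
        ≤ ∑ _j ∈ Finset.range m, C₀ :=
          Finset.sum_le_sum fun j _ => hC₀ _ _ (hgc _ _)
    _ = C₀ * m := by simp [mul_comm]
  exact ⟨N, hNlow, hNhigh, le_trans (two_pow_le_choose m)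
    (Nat.mul_le_mul_left _ hcomp)⟩


/-! ### Part B5: zero entropy implies prefix comparability -/

theorem comparable_of_zero_entropy [Fintype A] {θ : A → Finset (List A)}
    (hne : ∀ a, (θ a).Nonempty) (hwne : ∀ a, ∀ w ∈ θ a, w ≠ [])
    (hprim : IsPrimitive θ) (hX : (substShift θ).Nonempty)
    (h0 : topEntropy (substShift θ) = 0) :
    ∀ k a, ∀ u ∈ substPow θ k a, ∀ v ∈ substPow θ k a, u <+: v ∨ v <+: u := by
  classical
  by_contra hcon
  push_neg at hcon
  obtain ⟨k, a, u, hu, v, hv, huv1, huv2⟩ := hcon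
  obtain ⟨x₀, hx₀⟩ := hX
  obtain ⟨K, hKpos, hKprim⟩ := hprim
  obtain ⟨i₀, hi₀u, hi₀v, hne₀⟩ := exists_first_diff huv1 huv2
  have h1 : ∀ b, ∃ p q : List A, p ++ a :: q ∈ substPow θ K b := by
    intro b
    obtain ⟨w, hw, ha⟩ := hKprim a b
    obtain ⟨s, t, rfl⟩ := List.append_of_mem ha
    exact ⟨s, t, hw⟩
  choose α β hαβ using h1
  have h2 : ∀ b, ∃ w, w ∈ substPow θ k b := fun b => substPow_nonempty hne k b
  choose F hF using h2
  set C₀ : ℕ := Finset.univ.sup (fun b => (substPow θ (K + k) b).sup List.length) with hC₀def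
  have hC₀ : ∀ b, ∀ w ∈ substPow θ (K + k) b, w.length ≤ C₀ := by
    intro b w hw
    exact le_trans (Finset.le_sup (f := List.length) hw)
      (Finset.le_sup (f := fun b => (substPow θ (K + k) b).sup List.length) (Finset.mem_univ b))
  have hC₀1 : 1 ≤ C₀ := by
    obtain ⟨w, hw⟩ := substPow_nonempty hne (K + k) (x₀ 0)
    exact le_trans (one_le_length_of_mem_substPow hwne hw) (hC₀ _ _ hw)
  set f : ℕ → ℝ := fun n => Real.log (complexity (substShift θ) n) / n with hf
  have hApos : 0 < Fintype.card A := Fintype.card_pos_iff.2 ⟨x₀ 0⟩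
  have hlogA : 0 ≤ Real.log (Fintype.card A) := by
    apply Real.log_nonneg
    exact_mod_cast hApos
  have hbound : Filter.IsBoundedUnder (· ≤ ·) Filter.atTop f := by
    apply Filter.isBoundedUnder_of
    refine ⟨Real.log (Fintype.card A), fun n => ?_⟩
    rcases Nat.eq_zero_or_pos n with rfl | hn
    · simp [hf]
      exact hlogA
    · have hub : complexity (substShift θ) n ≤ Fintype.card A ^ n :=
        complexity_le_card_pow (x₀ 0) n
      have hlog : Real.log (complexity (substShift θ) n) ≤ n * Real.log (Fintype.card A) := by
        rcases Nat.eq_zero_or_pos (complexity (substShift θ) n) with hz | hpos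
        · rw [hz]
          simp
          positivity
        · calc Real.log (complexity (substShift θ) n)
              ≤ Real.log ((Fintype.card A : ℝ) ^ n) := by
                apply Real.log_le_log (by exact_mod_cast hpos)
                exact_mod_cast hub
          _ = n * Real.log (Fintype.card A) := by rw [Real.log_pow]
      rw [hf]
      rw [div_le_iff₀ (by exact_mod_cast hn)]
      calc Real.log (complexity (substShift θ) n) ≤ n * Real.log (Fintype.card A) := hlog
      _ = Real.log (Fintype.card A) * n := by ring
  have hfreq : ∃ᶠ n in Filter.atTop, Real.log 2 / (2 * C₀) ≤ f n := by
    rw [Filter.frequently_atTop]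
    intro M
    set m : ℕ := max M 6 with hm
    have hm6 : 6 ≤ m := le_max_right M 6
    obtain ⟨n, hn1, hn2, hn3⟩ := counting hne hwne hx₀ hu hv hi₀u hi₀v hne₀ hαβ hF hC₀ m
    refine ⟨n, by omega, ?_⟩
    set p : ℕ := complexity (substShift θ) n with hp
    have hnpos : 0 < n := by omega
    have hppos : 0 < p := by
      have h2m : 0 < 2 ^ m := Nat.pow_pos (by norm_num)
      by_contra hz
      push_neg at hz
      interval_cases p
      omega
    have hp2 : (2 : ℝ) ^ m ≤ ((m : ℝ) + 1) * p := by exact_mod_cast hn3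
    have hlogp : (m : ℝ) * Real.log 2 - Real.log ((m : ℝ) + 1) ≤ Real.log p := by
      have hl : Real.log ((2 : ℝ) ^ m) ≤ Real.log (((m : ℝ) + 1) * p) :=
        Real.log_le_log (by positivity) hp2
      rw [Real.log_pow, Real.log_mul (by positivity) (by exact_mod_cast hppos.ne')] at hl
      linarith
    have hsq : ((m : ℝ) + 1) ^ 2 ≤ (2 : ℝ) ^ m := by exact_mod_cast sq_le_two_pow hm6
    have hlogm1 : Real.log ((m : ℝ) + 1) ≤ ((m : ℝ) / 2) * Real.log 2 := by
      have hl : Real.log (((m : ℝ) + 1) ^ 2) ≤ Real.log ((2 : ℝ) ^ m) :=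
        Real.log_le_log (by positivity) hsq
      rw [Real.log_pow, Real.log_pow] at hl
      push_cast at hl
      linarith
    have hlogp2 : ((m : ℝ) / 2) * Real.log 2 ≤ Real.log p := by linarith
    have hlog2pos : 0 < Real.log 2 := Real.log_pos (by norm_num)
    have hmpos : (0 : ℝ) < m := by exact_mod_cast (by omega : 0 < m)
    have hkey : Real.log 2 / (2 * C₀) ≤ ((m : ℝ) / 2) * Real.log 2 / n := by
      have heq : ((m : ℝ) / 2) * Real.log 2 / ((C₀ : ℝ) * m) = Real.log 2 / (2 * C₀) := by
        field_simp
      rw [← heq]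
      apply div_le_div_of_nonneg_left (by positivity) (by exact_mod_cast hnpos)
      exact_mod_cast hn2
    refine le_trans hkey ?_
    show ((m : ℝ) / 2) * Real.log 2 / n ≤ Real.log p / n
    have hnR : (0 : ℝ) < n := by exact_mod_cast hnpos
    exact (div_le_div_iff_of_pos_right hnR).2 hlogp2
  have hδ : Real.log 2 / (2 * C₀) ≤ Filter.atTop.limsup f :=
    le_limsup_of_frequently_le hfreq hbound
  have hent : Filter.atTop.limsup f = 0 := h0
  have hδpos : 0 < Real.log 2 / (2 * C₀) := by
    apply div_pos (Real.log_pos (by norm_num))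
    have : (0 : ℝ) < C₀ := by exact_mod_cast hC₀1
    linarith
  rw [hent] at hδ
  linarith
end ZED



/-- if θ is a primitive random substitution whose subshift has zero
topological entropy, then the marginal φ of θ sending each letter to its longest
realisation is a primitive deterministic substitution with the same subshift. -/
theorem zero_entropy_deterministic {A : Type*} [Fintype A] [DecidableEq A]
    (θ : A → Finset (List A)) (hne : ∀ a, (θ a).Nonempty)
    (hwne : ∀ a, ∀ w ∈ θ a, w ≠ []) (hprim : IsPrimitive θ)
    (hX : (substShift θ).Nonempty)
    (h0 : topEntropy (substShift θ) = 0) :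
    ∃ φ : A → List A, (∀ a, φ a ∈ θ a) ∧
      (∀ a, ∀ u ∈ θ a, u.length ≤ (φ a).length) ∧
      IsPrimitive (fun a => ({φ a} : Finset (List A))) ∧
      substShift (fun a => ({φ a} : Finset (List A))) = substShift θ := by
  classical
  have hφex : ∀ a, ∃ w ∈ θ a, ∀ u ∈ θ a, u.length ≤ w.length :=
    fun a => Finset.exists_max_image (θ a) List.length (hne a)
  choose φ hφ using hφex
  have hφmem : ∀ a, φ a ∈ θ a := fun a => (hφ a).1
  have hφmax : ∀ a, ∀ u ∈ θ a, u.length ≤ (φ a).length := fun a => (hφ a).2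
  have hcomp := ZED.comparable_of_zero_entropy hne hwne hprim hX h0
  exact ⟨φ, hφmem, hφmax, ZED.isPrimitive_single φ hφmem hφmax hcomp hprim,
    ZED.substShift_eq φ hφmem hφmax hcomp⟩
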